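/- For all integers n ≥ 3 and m ≥ 2, R(P_n, 2K_m) = (n−1)(m−1) + 2, where P_n is the path on n vertices. -/

import Mathlib

open SimpleGraph Finset

/-- `G` embeds into `H` (a copy of `G` appears in `H`). -/
def graphEmbeds {V W : Type*} (G : SimpleGraph V) (H : SimpleGraph W) : Prop :=
  ∃ f : V → W, Function.Injective f ∧ ∀ u v, G.Adj u v → H.Adj (f u) (f v)

/-- `N` is large enough for the Ramsey property: every red/blue coloring of `K_N`
(the red graph `R`, blue graph `Rᶜ`) contains a red `G` or a blue `H`. -/
def isRamsey {V W : Type*} (G : SimpleGraph V) (H : SimpleGraph W) (N : ℕ) : Prop :=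
  ∀ R : SimpleGraph (Fin N), graphEmbeds G R ∨ graphEmbeds H Rᶜ

/-- The Ramsey number `R(G,H)`. -/
noncomputable def ramsey {V W : Type*} (G : SimpleGraph V) (H : SimpleGraph W) : ℕ :=
  sInf {N | isRamsey G H N}

/-- `t` disjoint copies of the complete graph `K_m`. -/
def kCliques (t m : ℕ) : SimpleGraph (Fin t × Fin m) where
  Adj x y := x.1 = y.1 ∧ x.2 ≠ y.2
  symm := ⟨fun x y h => ⟨h.1.symm, h.2.symm⟩⟩
  loopless := ⟨fun x h => h.2 rfl⟩

/-- The chromatic number as a natural number. -/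
noncomputable def chromNum {V : Type*} (G : SimpleGraph V) : ℕ := sInf {n | G.Colorable n}

/-- The chromatic surplus: the minimum size of a color class over all proper
colorings with `chromNum G` colors. -/
noncomputable def surplus {V : Type*} [Fintype V] (G : SimpleGraph V) : ℕ :=
  sInf {k | ∃ C : G.Coloring (Fin (chromNum G)), ∃ i : Fin (chromNum G),
    (Finset.univ.filter (fun v => C v = i)).card = k}

/-- `a` is a leaf of `G`: it has a unique neighbor. -/
def IsLeaf {V : Type*} (G : SimpleGraph V) (a : V) : Prop := ∃! w, G.Adj a w

/-- Stretching: delete a leaf `b` and attach a new vertex (reusing the label `b`)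
to the leaf `a`. -/
def isStretch {V : Type*} (T T' : SimpleGraph V) : Prop :=
  ∃ a b : V, a ≠ b ∧ IsLeaf T a ∧ IsLeaf T b ∧
    ∀ x y, T'.Adj x y ↔
      ((T.Adj x y ∧ x ≠ b ∧ y ≠ b) ∨ (x = b ∧ y = a) ∨ (x = a ∧ y = b))

/-- Expanding at a vertex `u` of degree `d` (`2 ≤ d ≤ n-2`) all of whose neighbors
are leaves except `z0`: delete a leaf `b` outside `N[u]` and attach a new vertex
(reusing the label `b`) to `u`. -/
def isExpand {V : Type*} [Fintype V] (T T' : SimpleGraph V) : Prop :=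
  ∃ u b z0 : V, T.Adj u z0 ∧ ¬ IsLeaf T z0 ∧
    (∀ z, T.Adj u z → z ≠ z0 → IsLeaf T z) ∧
    2 ≤ (T.neighborSet u).ncard ∧ (T.neighborSet u).ncard ≤ Fintype.card V - 2 ∧
    IsLeaf T b ∧ b ≠ u ∧ ¬ T.Adj u b ∧
    ∀ x y, T'.Adj x y ↔
      ((T.Adj x y ∧ x ≠ b ∧ y ≠ b) ∨ (x = b ∧ y = u) ∨ (x = u ∧ y = b))

/-- Disjoint union of `K_m` and `K_l`. -/
def kUnion (m l : ℕ) : SimpleGraph (Fin m ⊕ Fin l) where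
  Adj x y := x ≠ y ∧ ((x.isLeft ∧ y.isLeft) ∨ (x.isRight ∧ y.isRight))
  symm := ⟨fun x y h => ⟨h.1.symm, h.2.imp (fun p => ⟨p.2, p.1⟩) (fun p => ⟨p.2, p.1⟩)⟩⟩
  loopless := ⟨fun x h => h.1 rfl⟩

/-- Disjoint union of `k` graphs, each on `Fin n`. -/
def disjUnion {k n : ℕ} (Fs : Fin k → SimpleGraph (Fin n)) :
    SimpleGraph (Fin k × Fin n) where
  Adj x y := x.1 = y.1 ∧ (Fs x.1).Adj x.2 y.2
  symm := by
    refine ⟨?_⟩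
    rintro ⟨i, a⟩ ⟨j, b⟩ ⟨h1, h2⟩
    dsimp at h1 h2 ⊢
    subst h1
    exact ⟨rfl, h2.symm⟩
  loopless := by
    refine ⟨?_⟩
    rintro ⟨i, a⟩ ⟨h1, h2⟩
    exact (Fs i).irrefl h2

/-- Disjoint union of graphs `Fs i` on `Fin (n i)`. -/
def sigmaUnion {r : ℕ} {n : Fin r → ℕ} (Fs : ∀ i, SimpleGraph (Fin (n i))) :
    SimpleGraph (Σ i, Fin (n i)) where
  Adj x y := ∃ (i : Fin r) (a b : Fin (n i)), x = ⟨i, a⟩ ∧ y = ⟨i, b⟩ ∧ (Fs i).Adj a b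
  symm := by
    refine ⟨?_⟩
    rintro x y ⟨i, a, b, hx, hy, h⟩
    exact ⟨i, b, a, hy, hx, h.symm⟩
  loopless := by
    refine ⟨?_⟩
    rintro x ⟨i, a, b, hx, hy, h⟩
    rw [hx] at hy
    obtain ⟨-, hab⟩ := (Sigma.mk.inj_iff).mp hy
    exact (Fs i).irrefl (by cases eq_of_heq hab; exact h)

section AuxRamseyPath2Km

lemma valid_len_le {N : ℕ} (s : Finset (Fin N)) (l : List (Fin N))
    (hnd : l.Nodup) (hmem : ∀ v ∈ l, v ∈ s) : l.length ≤ s.card := by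
  classical
  calc l.length = l.toFinset.card := (List.toFinset_card_of_nodup hnd).symm
  _ ≤ s.card := Finset.card_le_card (fun v hv => hmem v (List.mem_toFinset.mp hv))

lemma exists_maximal_chain {N : ℕ} (G : SimpleGraph (Fin N)) (s : Finset (Fin N))
    (hs : s.Nonempty) :
    ∃ (x : Fin N) (xs : List (Fin N)),
      (x::xs).Nodup ∧ (∀ v ∈ x::xs, v ∈ s) ∧ (x::xs).Chain' G.Adj ∧
      (∀ w ∈ s, w ∉ x::xs → ¬ G.Adj x w) ∧
      (∀ w ∈ s, w ∉ x::xs → ¬ G.Adj ((x::xs).getLast (List.cons_ne_nil x xs)) w) := by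
  classical
  set P : ℕ → Prop := fun k => ∃ l : List (Fin N),
    l.Nodup ∧ (∀ v ∈ l, v ∈ s) ∧ l.Chain' G.Adj ∧ l.length = k with hP
  obtain ⟨v0, hv0⟩ := hs
  have hP1 : P 1 := ⟨[v0], by simp, by simpa using hv0, List.isChain_singleton _, rfl⟩
  have hcard : 1 ≤ s.card := Finset.card_pos.mpr ⟨v0, hv0⟩
  set K := Nat.findGreatest P s.card with hKdef
  have hPK : P K := Nat.findGreatest_spec hcard hP1
  have hK1 : 1 ≤ K := Nat.le_findGreatest hcard hP1
  have hmax : ∀ l : List (Fin N), l.Nodup → (∀ v ∈ l, v ∈ s) → l.Chain' G.Adj →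
      l.length = K → ∀ w ∈ s, w ∉ l → ∀ x ∈ l.head?, ¬ G.Adj w x := by
    rintro l hnd hmem hch hlen w hws hwl x hx hadj
    have hvalid : (w::l).Nodup ∧ (∀ v ∈ w::l, v ∈ s) ∧ (w::l).Chain' G.Adj := by
      refine ⟨List.nodup_cons.mpr ⟨hwl, hnd⟩, ?_, ?_⟩
      · intro v hv; rcases List.mem_cons.mp hv with h | h
        · exact h ▸ hws
        · exact hmem v h
      · exact hch.cons (fun y hy => by
          rw [hx] at hy; cases hy; exact hadj)
    have hle : (w::l).length ≤ s.card := valid_len_le s _ hvalid.1 hvalid.2.1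
    have := Nat.findGreatest_is_greatest (show K < K + 1 by omega)
      (by simpa [hlen] using hle)
    exact this ⟨w::l, hvalid.1, hvalid.2.1, hvalid.2.2, by simp [hlen]⟩
  obtain ⟨l, hnd, hmem, hch, hlen⟩ := hPK
  obtain ⟨x, xs, rfl⟩ : ∃ x xs, l = x :: xs := by
    cases l with
    | nil => simp at hlen; omega
    | cons a as => exact ⟨a, as, rfl⟩
  refine ⟨x, xs, hnd, hmem, hch, ?_, ?_⟩
  · intro w hws hwl hadj
    exact hmax _ hnd hmem hch hlen w hws hwl x rfl (G.adj_symm hadj)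
  · intro w hws hwl hadj
    have hndr : (x::xs).reverse.Nodup := List.nodup_reverse.mpr hnd
    have hmemr : ∀ v ∈ (x::xs).reverse, v ∈ s := fun v hv => hmem v (List.mem_reverse.mp hv)
    have hchr : (x::xs).reverse.Chain' G.Adj := by
      rw [List.Chain', List.isChain_reverse]
      exact hch.imp (fun a b h => h.symm)
    have hlenr : (x::xs).reverse.length = K := by simpa using hlen
    have hhead : (x::xs).getLast (List.cons_ne_nil x xs) ∈ (x::xs).reverse.head? := by
      rw [List.head?_reverse]
      exact List.getLast?_eq_getLast (List.cons_ne_nil x xs) ▸ rfl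
    exact hmax _ hndr hmemr hchr hlenr w hws (fun h => hwl (List.mem_reverse.mp h))
      _ hhead (G.adj_symm hadj)

lemma arith_single (n c S S' : ℕ) (hn : 3 ≤ n) (h : S' ≤ (n-1)*(c/2) + c%2)
    (hs : S = S' + 1) : S ≤ (n-1)*((c+1)/2) + (c+1)%2 := by
  rcases Nat.even_or_odd c with ⟨q, hq⟩ | ⟨q, hq⟩
  · have e : (c+1)/2 = c/2 := by omega
    rw [e]
    generalize (n-1)*(c/2) = t at h ⊢
    omega
  · have e : (c+1)/2 = c/2 + 1 := by omega
    rw [e, Nat.mul_add, Nat.mul_one]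
    generalize (n-1)*(c/2) = t at h ⊢
    omega

lemma arith_double (n c S S' len : ℕ) (h : S' ≤ (n-1)*(c/2) + c%2)
    (hlen : len ≤ n - 1) (hs : S = S' + len) : S ≤ (n-1)*((c+2)/2) + (c+2)%2 := by
  have e : (c+2)/2 = c/2 + 1 := by omega
  have e2 : (c+2)%2 = c%2 := by omega
  rw [e, e2, Nat.mul_add, Nat.mul_one]
  generalize (n-1)*(c/2) = t at h ⊢
  omega

lemma indep_insert {N : ℕ} (G : SimpleGraph (Fin N)) (A : Finset (Fin N)) (x : Fin N)
    (hA : ∀ a ∈ A, ∀ b ∈ A, ¬ G.Adj a b) (hx : ∀ v ∈ A, ¬ G.Adj x v) :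
    ∀ a ∈ insert x A, ∀ b ∈ insert x A, ¬ G.Adj a b := by
  intro a ha b hb
  rcases Finset.mem_insert.mp ha with h1 | h1 <;> rcases Finset.mem_insert.mp hb with h2 | h2
  · rw [h1, h2]; exact G.irrefl
  · rw [h1]; exact hx b h2
  · rw [h2]; exact fun h => hx a h1 h.symm
  · exact hA a h1 b h2

lemma main_greedy {N n : ℕ} (hn : 3 ≤ n) (G : SimpleGraph (Fin N))
    (hG : ∀ l : List (Fin N), l.Nodup → l.Chain' G.Adj → l.length ≤ n - 1)
    (s : Finset (Fin N)) :
    ∃ A B : Finset (Fin N), A ⊆ s ∧ B ⊆ s ∧ Disjoint A B ∧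
      (∀ a ∈ A, ∀ b ∈ A, ¬ G.Adj a b) ∧ (∀ a ∈ B, ∀ b ∈ B, ¬ G.Adj a b) ∧
      (A.card = B.card ∨ A.card = B.card + 1) ∧
      s.card ≤ (n-1) * ((A.card + B.card)/2) + (A.card + B.card) % 2 := by
  classical
  induction s using Finset.strongInduction with
  | _ s IH =>
  rcases s.eq_empty_or_nonempty with rfl | hs
  · exact ⟨∅, ∅, by simp, by simp, by simp, by simp, by simp, Or.inl rfl, by simp⟩
  obtain ⟨x, xs, hnd, hmem, hch, hheadmax, hlastmax⟩ := exists_maximal_chain G s hs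
  set l := x :: xs with hl
  set s' := s \ l.toFinset with hs'
  have hxs : x ∈ s := hmem x (by simp [hl])
  have hsub : s' ⊂ s := by
    refine Finset.sdiff_ssubset ?_ ?_
    · intro v hv
      exact hmem v (List.mem_toFinset.mp hv)
    · exact ⟨x, by simp [hl]⟩
  obtain ⟨A, B, hAs, hBs, hdisj, hAind, hBind, hab, hcard⟩ := IH s' hsub
  have hcardeq : s.card = s'.card + l.length := by
    have h1 : l.toFinset ⊆ s := fun v hv => hmem v (List.mem_toFinset.mp hv)
    have h2 : l.toFinset.card = l.length := List.toFinset_card_of_nodup hnd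
    have h3 : s'.card = s.card - l.toFinset.card := Finset.card_sdiff_of_subset h1
    have h4 : l.toFinset.card ≤ s.card := Finset.card_le_card h1
    omega
  have hnotmem : ∀ v ∈ s', v ∉ l := by
    intro v hv
    rw [hs', Finset.mem_sdiff] at hv
    exact fun h => hv.2 (List.mem_toFinset.mpr h)
  have hsub' : ∀ v ∈ s', v ∈ s := fun v hv => (Finset.mem_sdiff.mp hv).1
  have hxA : x ∉ A := fun h => hnotmem x (hAs h) (by simp [hl])
  have hxB : x ∉ B := fun h => hnotmem x (hBs h) (by simp [hl])
  have hlen : l.length ≤ n - 1 := hG l hnd hch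
  have hxind : ∀ v ∈ s', ¬ G.Adj x v := fun v hv =>
    hheadmax v (hsub' v hv) (hnotmem v hv)
  cases xs with
  | nil =>
    rcases hab with heq | hgt
    · refine ⟨insert x B, A, ?_, fun a ha => hsub' a (hAs ha), ?_, ?_, hAind, ?_, ?_⟩
      · intro a ha
        rcases Finset.mem_insert.mp ha with rfl | ha
        · exact hxs
        · exact hsub' a (hBs ha)
      · rw [Finset.disjoint_insert_left]
        exact ⟨hxA, hdisj.symm⟩
      · exact indep_insert G B x hBind (fun v hv => hxind v (hBs hv))
      · right
        rw [Finset.card_insert_of_notMem hxB, heq]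
      · have e : (insert x B).card + A.card = (A.card + B.card) + 1 := by
          rw [Finset.card_insert_of_notMem hxB]; omega
        rw [e]
        exact arith_single n (A.card + B.card) _ _ hn hcard (by simpa [hl] using hcardeq)
    · refine ⟨A, insert x B, fun a ha => hsub' a (hAs ha), ?_, ?_, hAind, ?_, ?_, ?_⟩
      · intro a ha
        rcases Finset.mem_insert.mp ha with rfl | ha
        · exact hxs
        · exact hsub' a (hBs ha)
      · rw [Finset.disjoint_insert_right]
        exact ⟨hxA, hdisj⟩
      · exact indep_insert G B x hBind (fun v hv => hxind v (hBs hv))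
      · left
        rw [Finset.card_insert_of_notMem hxB, hgt]
      · have e : A.card + (insert x B).card = (A.card + B.card) + 1 := by
          rw [Finset.card_insert_of_notMem hxB]; omega
        rw [e]
        exact arith_single n (A.card + B.card) _ _ hn hcard (by simpa [hl] using hcardeq)
  | cons y ys =>
    set z := l.getLast (List.cons_ne_nil x (y::ys)) with hz
    have hzl : z ∈ l := List.getLast_mem _
    have hzs : z ∈ s := hmem z hzl
    have hzx : z ≠ x := by
      intro h
      have : l.getLast (List.cons_ne_nil x (y::ys)) ∈ y :: ys := by
        rw [List.getLast_cons (List.cons_ne_nil y ys)]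
        exact List.getLast_mem _
      rw [← hz, h] at this
      exact (List.nodup_cons.mp hnd).1 this
    have hzA : z ∉ A := fun h => hnotmem z (hAs h) hzl
    have hzB : z ∉ B := fun h => hnotmem z (hBs h) hzl
    have hzind : ∀ v ∈ s', ¬ G.Adj z v := fun v hv =>
      hlastmax v (hsub' v hv) (hnotmem v hv)
    refine ⟨insert x A, insert z B, ?_, ?_, ?_, ?_, ?_, ?_, ?_⟩
    · intro a ha
      rcases Finset.mem_insert.mp ha with rfl | ha
      · exact hxs
      · exact hsub' a (hAs ha)
    · intro a ha
      rcases Finset.mem_insert.mp ha with rfl | ha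
      · exact hzs
      · exact hsub' a (hBs ha)
    · rw [Finset.disjoint_insert_left, Finset.disjoint_insert_right]
      refine ⟨by simp [hzx.symm, hxB], hzA, hdisj⟩
    · exact indep_insert G A x hAind (fun v hv => hxind v (hAs hv))
    · exact indep_insert G B z hBind (fun v hv => hzind v (hBs hv))
    · rw [Finset.card_insert_of_notMem hxA, Finset.card_insert_of_notMem hzB]
      rcases hab with h | h
      · left; omega
      · right; omega
    · have e : (insert x A).card + (insert z B).card = (A.card + B.card) + 2 := by
        rw [Finset.card_insert_of_notMem hxA, Finset.card_insert_of_notMem hzB]; omega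
      rw [e]
      exact arith_double n (A.card + B.card) _ _ l.length hcard hlen hcardeq

lemma no_long_chain {N n : ℕ} (G : SimpleGraph (Fin N))
    (h : ¬ graphEmbeds (pathGraph n) G)
    (l : List (Fin N)) (hnd : l.Nodup) (hch : l.Chain' G.Adj) : l.length ≤ n - 1 := by
  by_contra hlen
  push_neg at hlen
  have hnl : n ≤ l.length := by omega
  set t := l.take n with ht
  have htlen : t.length = n := by simp [ht, Nat.min_eq_left hnl]
  have htnd : t.Nodup := hnd.sublist (List.take_sublist n l)
  have htch : t.Chain' G.Adj := hch.take n
  apply h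
  refine ⟨fun i => t.get (Fin.cast htlen.symm i), ?_, ?_⟩
  · intro i j hij
    have h2 := (List.nodup_iff_injective_get.mp htnd) hij
    simpa [Fin.ext_iff] using h2
  · intro u v huv
    rw [pathGraph_adj] at huv
    have key : ∀ (i : ℕ) (hi : i + 1 < t.length),
        G.Adj (t.get ⟨i, by omega⟩) (t.get ⟨i+1, hi⟩) := by
      intro i hi
      exact List.isChain_iff_getElem.mp htch i (by omega)
    rcases huv with h1 | h1
    · have := key u.val (by omega)
      convert this using 2 <;> simp [Fin.ext_iff] <;> omega
    · have := (key v.val (by omega)).symm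
      convert this using 2 <;> simp [Fin.ext_iff] <;> omega

lemma blue_two_cliques {N m : ℕ} (R : SimpleGraph (Fin N)) (A B : Finset (Fin N))
    (hdisj : Disjoint A B)
    (hA : ∀ a ∈ A, ∀ b ∈ A, ¬ R.Adj a b) (hB : ∀ a ∈ B, ∀ b ∈ B, ¬ R.Adj a b)
    (hAm : m ≤ A.card) (hBm : m ≤ B.card) : graphEmbeds (kCliques 2 m) Rᶜ := by
  classical
  obtain ⟨A', hA'sub, hA'⟩ := Finset.exists_subset_card_eq hAm
  obtain ⟨B', hB'sub, hB'⟩ := Finset.exists_subset_card_eq hBm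
  refine ⟨fun p => if p.1 = 0 then A'.orderEmbOfFin hA' p.2 else B'.orderEmbOfFin hB' p.2,
    ?_, ?_⟩
  · intro p q hpq
    have hmemA : ∀ i, A'.orderEmbOfFin hA' i ∈ A := fun i =>
      hA'sub (Finset.orderEmbOfFin_mem A' hA' i)
    have hmemB : ∀ i, B'.orderEmbOfFin hB' i ∈ B := fun i =>
      hB'sub (Finset.orderEmbOfFin_mem B' hB' i)
    have htwo : ∀ i : Fin 2, i ≠ 0 → i = 1 := by decide
    by_cases h1 : p.1 = 0 <;> by_cases h2 : q.1 = 0 <;> simp [h1, h2] at hpq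
    · exact Prod.ext (h1.trans h2.symm) hpq
    · exfalso
      have hb := hmemB q.2
      rw [← hpq] at hb
      exact Finset.disjoint_left.mp hdisj (hmemA p.2) hb
    · exfalso
      have hb := hmemB p.2
      rw [hpq] at hb
      exact Finset.disjoint_left.mp hdisj (hmemA q.2) hb
    · exact Prod.ext ((htwo p.1 h1).trans (htwo q.1 h2).symm) hpq
  · rintro u v (⟨h1, h2⟩ : u.1 = v.1 ∧ u.2 ≠ v.2)
    rw [SimpleGraph.compl_adj]
    by_cases h0 : u.1 = 0
    · have h0' : v.1 = 0 := h1 ▸ h0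
      simp only [h0, h0', if_pos rfl]
      constructor
      · exact fun heq => h2 ((A'.orderEmbOfFin hA').injective heq)
      · exact hA _ (hA'sub (Finset.orderEmbOfFin_mem A' hA' u.2))
          _ (hA'sub (Finset.orderEmbOfFin_mem A' hA' v.2))
    · have h0' : ¬ v.1 = 0 := h1 ▸ h0
      simp only [if_neg h0, if_neg h0']
      constructor
      · exact fun heq => h2 ((B'.orderEmbOfFin hB').injective heq)
      · exact hB _ (hB'sub (Finset.orderEmbOfFin_mem B' hB' u.2))
          _ (hB'sub (Finset.orderEmbOfFin_mem B' hB' v.2))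

lemma isRamsey_mono {V W : Type*} (G : SimpleGraph V) (H : SimpleGraph W) {N M : ℕ}
    (h : isRamsey G H N) (hNM : N ≤ M) : isRamsey G H M := by
  intro R
  have hinj : Function.Injective (Fin.castLE hNM) := Fin.castLE_injective hNM
  rcases h (R.comap (Fin.castLE hNM)) with ⟨f, hf, hadj⟩ | ⟨f, hf, hadj⟩
  · exact Or.inl ⟨fun v => Fin.castLE hNM (f v), hinj.comp hf, fun u v huv => hadj u v huv⟩
  · refine Or.inr ⟨fun v => Fin.castLE hNM (f v), hinj.comp hf, fun u v huv => ?_⟩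
    have := hadj u v huv
    rw [SimpleGraph.compl_adj] at this ⊢
    exact ⟨fun heq => this.1 (hinj heq), this.2⟩

/-- The lower bound coloring: blocks of size `n-1` plus one extra vertex. -/
def blockGraph (n M : ℕ) : SimpleGraph (Fin M) where
  Adj v w := v ≠ w ∧ v.val / (n-1) = w.val / (n-1)
  symm := ⟨fun v w h => ⟨h.1.symm, h.2.symm⟩⟩
  loopless := ⟨fun v h => h.1 rfl⟩

lemma no_red_path (n m : ℕ) (hn : 3 ≤ n) (hm : 2 ≤ m) :
    ¬ graphEmbeds (pathGraph n) (blockGraph n ((n-1)*(m-1)+1)) := by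
  rintro ⟨f, hinj, hadj⟩
  have h0 : (0:ℕ) < n := by omega
  have hsame : ∀ k (hk : k < n),
      (f ⟨k, hk⟩).val / (n-1) = (f ⟨0, h0⟩).val / (n-1) := by
    intro k
    induction k with
    | zero => intro hk; rfl
    | succ j ihj =>
      intro hk
      have hj : j < n := by omega
      have hadj' := hadj ⟨j, hj⟩ ⟨j+1, hk⟩ (pathGraph_adj.mpr (Or.inl rfl))
      exact (hadj' : _ ∧ _).2.symm.trans (ihj hj)
  set c := (f ⟨0, h0⟩).val / (n-1) with hc
  have hg : ∀ i : Fin n, (f i).val % (n-1) < n - 1 := fun i => Nat.mod_lt _ (by omega)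
  have hginj : Function.Injective
      (fun i : Fin n => (⟨(f i).val % (n-1), hg i⟩ : Fin (n-1))) := by
    intro i j hij
    apply hinj
    apply Fin.ext
    have hdiv : (f i).val / (n-1) = (f j).val / (n-1) := by
      rw [show (f i) = f ⟨i.val, i.isLt⟩ by rfl, show (f j) = f ⟨j.val, j.isLt⟩ by rfl,
        hsame i.val i.isLt, hsame j.val j.isLt]
    have hmod : (f i).val % (n-1) = (f j).val % (n-1) := by
      simpa using congrArg Fin.val hij
    have e1 := Nat.div_add_mod (f i).val (n-1)
    have e2 := Nat.div_add_mod (f j).val (n-1)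
    rw [hdiv] at e1
    generalize (n-1) * ((f j).val/(n-1)) = t at e1 e2
    omega
  have := Fintype.card_le_of_injective _ hginj
  simp at this
  omega

lemma no_blue_2km (n m : ℕ) (hn : 3 ≤ n) (hm : 2 ≤ m) :
    ¬ graphEmbeds (kCliques 2 m) (blockGraph n ((n-1)*(m-1)+1))ᶜ := by
  rintro ⟨f, hinj, hadj⟩
  have hn1 : 0 < n - 1 := by omega
  have hblock : ∀ p : Fin 2 × Fin m, (f p).val / (n-1) < m := by
    intro p
    have : (f p).val < m * (n-1) := by
      have := (f p).isLt
      have hle : (n-1)*(m-1)+1 ≤ m*(n-1) := by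
        have h1 : m*(n-1) = (m-1)*(n-1) + (n-1) := by
          conv_lhs => rw [show m = (m-1)+1 from by omega, Nat.add_mul, Nat.one_mul]
        rw [h1, Nat.mul_comm (m-1) (n-1)]
        have h3 : 2 ≤ n - 1 := by omega
        omega
      omega
    exact Nat.div_lt_iff_lt_mul hn1 |>.mpr this
  have key : ∀ i : Fin 2, ∃ j : Fin m, (f (i, j)).val = (n-1)*(m-1) := by
    intro i
    set b : Fin m → Fin m := fun j => ⟨(f (i, j)).val / (n-1), hblock (i, j)⟩ with hb
    have hbinj : Function.Injective b := by
      intro j j' hjj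
      by_contra hne
      have hadj' := hadj (i, j) (i, j') (show (i, j).1 = (i, j').1 ∧ (i, j).2 ≠ (i, j').2 from ⟨rfl, hne⟩)
      rw [SimpleGraph.compl_adj] at hadj'
      apply hadj'.2
      exact (⟨hadj'.1, congrArg Fin.val hjj⟩ : _ ∧ _)
    have hbsurj : Function.Surjective b := Finite.surjective_of_injective hbinj
    obtain ⟨j, hj⟩ := hbsurj ⟨m-1, by omega⟩
    refine ⟨j, ?_⟩
    have hdiv : (f (i, j)).val / (n-1) = m - 1 := congrArg Fin.val hj
    have h1 : (n-1) * ((f (i,j)).val / (n-1)) ≤ (f (i,j)).val :=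
      Nat.mul_div_le _ _ |>.trans (le_refl _) |>.trans_eq rfl
    have h2 : (f (i,j)).val < (n-1)*(m-1)+1 := (f (i,j)).isLt
    rw [hdiv] at h1
    omega
  obtain ⟨j0, hj0⟩ := key 0
  obtain ⟨j1, hj1⟩ := key 1
  have : f (0, j0) = f (1, j1) := Fin.ext (hj0.trans hj1.symm)
  have := hinj this
  simp at this

end AuxRamseyPath2Km

/-- `R(P_n, 2K_m) = (n-1)(m-1) + 2` for `n ≥ 3`, `m ≥ 2`. -/
theorem stmt_3 (n m : ℕ) (hn : 3 ≤ n) (hm : 2 ≤ m) :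
    ramsey (pathGraph n) (kCliques 2 m) = (n - 1) * (m - 1) + 2 := by
  classical
  have hup : isRamsey (pathGraph n) (kCliques 2 m) ((n-1)*(m-1)+2) := by
    intro R
    by_cases hred : graphEmbeds (pathGraph n) R
    · exact Or.inl hred
    right
    have hG : ∀ l : List (Fin ((n-1)*(m-1)+2)), l.Nodup → l.Chain' R.Adj →
        l.length ≤ n - 1 := fun l hnd hch => no_long_chain R hred l hnd hch
    obtain ⟨A, B, hAs, hBs, hdisj, hAind, hBind, hab, hcard⟩ :=
      main_greedy hn R hG Finset.univ
    have huniv : (Finset.univ : Finset (Fin ((n-1)*(m-1)+2))).card = (n-1)*(m-1)+2 := by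
      simp
    rw [huniv] at hcard
    have hcge : 2*m ≤ A.card + B.card := by
      by_contra hlt
      push_neg at hlt
      have h1 : (A.card + B.card)/2 ≤ m - 1 := by omega
      have h2 : (n-1)*((A.card+B.card)/2) ≤ (n-1)*(m-1) := Nat.mul_le_mul_left _ h1
      have hr : (A.card + B.card) % 2 ≤ 1 := by omega
      have h3 : (n-1)*(m-1)+2 ≤ (n-1)*(m-1) + 1 := hcard.trans (Nat.add_le_add h2 hr)
      exact absurd h3 (by simp)
    have hAm : m ≤ A.card := by omega
    have hBm : m ≤ B.card := by omega
    exact blue_two_cliques R A B hdisj hAind hBind hAm hBm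
  have hnotlow : ¬ isRamsey (pathGraph n) (kCliques 2 m) ((n-1)*(m-1)+1) := by
    intro h
    rcases h (blockGraph n ((n-1)*(m-1)+1)) with hr | hb
    · exact no_red_path n m hn hm hr
    · exact no_blue_2km n m hn hm hb
  apply le_antisymm
  · exact Nat.sInf_le hup
  · refine le_csInf ⟨_, hup⟩ ?_
    intro k hk
    by_contra hlt
    push_neg at hlt
    exact hnotlow (isRamsey_mono _ _ hk (by omega))
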